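/- Let G ∈ 𝔗_a. If P = P_0,…,P_{h_G} and P' = P'_0,…,P'_{h_G} are paths of length h_G in G and P_i = P'_j for some indices i and j, then i = j. Equivalently, there is a map g from the set of vertices lying on paths of length h_G to {0,…,h_G} such that v = P_{g(v)} for every path P of length h_G in G and every vertex v of P. -/

import Mathlib

/-- A finite digraph: a finite nonempty vertex set `V ⊆ ℕ` together with an
arc set `A ⊆ V × V`. -/
structure Dgraph where
  V : Finset ℕ
  nonempty : V.Nonempty
  A : Finset (ℕ × ℕ)
  A_sub : ∀ p ∈ A, p.1 ∈ V ∧ p.2 ∈ V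

namespace Dgraph

/-- The set of proper arcs of `G`, i.e. the arc set of `G*`. -/
def Astar (G : Dgraph) : Finset (ℕ × ℕ) := G.A.filter (fun p => p.1 ≠ p.2)

/-- `G` is reflexive. -/
def IsRefl (G : Dgraph) : Prop := ∀ v ∈ G.V, (v, v) ∈ G.A

/-- `p` is a path in `G` (a nonempty list of pairwise distinct vertices,
consecutive ones joined by arcs).  Its length as a path is `p.length - 1`. -/
def IsPath (G : Dgraph) (p : List ℕ) : Prop :=
  p ≠ [] ∧ p.Nodup ∧ (∀ v ∈ p, v ∈ G.V) ∧ p.Chain' (fun v w => (v, w) ∈ G.A)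

/-- `p` is a path in `G*`. -/
def IsPathStar (G : Dgraph) (p : List ℕ) : Prop :=
  p ≠ [] ∧ p.Nodup ∧ (∀ v ∈ p, v ∈ G.V) ∧ p.Chain' (fun v w => (v, w) ∈ G.A ∧ v ≠ w)

/-- `G*` contains a closed walk. -/
def HasClosedWalkStar (G : Dgraph) : Prop :=
  ∃ p : List ℕ, (∀ v ∈ p, v ∈ G.V) ∧ p.Chain' (fun v w => (v, w) ∈ G.A ∧ v ≠ w) ∧
    2 ≤ p.length ∧ p.head? = p.getLast?

/-- membership in the class `𝔗ₐ`: `G*` is acyclic. -/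
def MemTa (G : Dgraph) : Prop := ¬ G.HasClosedWalkStar

/-- The height of `G`: the maximal length of a path in `G`. -/
noncomputable def height (G : Dgraph) : ℕ :=
  sSup {n | ∃ p, G.IsPath p ∧ p.length = n + 1}

/-- The interval `[v,w]_G`. -/
def interval (G : Dgraph) (v w : ℕ) : Finset ℕ :=
  G.V.filter (fun z => (v, z) ∈ G.A ∧ (z, w) ∈ G.A)

/-- `ι(v,w)_G`, the cardinality of the interval `[v,w]_G`. -/
def iota (G : Dgraph) (v w : ℕ) : ℕ := (G.interval v w).card

/-- The set `𝓗(G,H)` of homomorphisms from `G` to `H` (represented as total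
maps `ℕ → ℕ`, normalized to `0` outside of `V(G)`). -/
def Hom (G H : Dgraph) : Set (ℕ → ℕ) :=
  {f | (∀ v ∈ G.V, f v ∈ H.V) ∧ (∀ p ∈ G.A, (f p.1, f p.2) ∈ H.A) ∧
    ∀ v, v ∉ G.V → f v = 0}

/-- The set `𝓢(G,H)` of strict homomorphisms from `G` to `H`. -/
def SHom (G H : Dgraph) : Set (ℕ → ℕ) :=
  {f ∈ Hom G H | ∀ p ∈ G.Astar, f p.1 ≠ f p.2}

/-- `μ_ξ(G)`, for a homomorphism `ξ` from `G` into `H`. -/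
def mu (G H : Dgraph) (f : ℕ → ℕ) : ℕ :=
  ∑ p ∈ G.Astar, H.iota (f p.1) (f p.2)

/-- `L` is a subgraph of `G`. -/
def Subgraph (L G : Dgraph) : Prop := L.V ⊆ G.V ∧ L.A ⊆ G.A

/-- Restriction of a map to a vertex set (normalized to `0` outside). -/
def restrict (X : Finset ℕ) (f : ℕ → ℕ) : ℕ → ℕ := fun x => if x ∈ X then f x else 0

/-- `𝓜(L,H)`: homomorphisms from `L` to `H` with maximal `μ`. -/
def MSet (L H : Dgraph) : Set (ℕ → ℕ) :=
  {f ∈ Hom L H | ∀ g ∈ Hom L H, mu L H g ≤ mu L H f}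

/-- `𝓜^𝓛(G,H)`. -/
def MLSet (G H : Dgraph) (𝓛 : Set Dgraph) : Set (ℕ → ℕ) :=
  {f ∈ Hom G H | ∀ L ∈ 𝓛, restrict L.V f ∈ MSet L H}

/-- `𝓙^𝓛_{G,H'}(ξ)` for `ξ ∈ 𝓗(G,H)`. -/
def JSet (G H H' : Dgraph) (𝓛 : Set Dgraph) (ξ : ℕ → ℕ) : Set (ℕ → ℕ) :=
  {ζ ∈ Hom G H' | ∀ L ∈ 𝓛, ∀ p ∈ L.Astar,
    H'.iota (ζ p.1) (ζ p.2) = H.iota (ξ p.1) (ξ p.2)}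

/-- The digraph `P_×` of a path `P = P_0, …, P_ℓ`: vertex set `{P_0,…,P_ℓ}`
and arcs `P_{i-1}P_i`. -/
def pathGraph (P : List ℕ) (h : P ≠ []) : Dgraph where
  V := P.toFinset
  nonempty := by
    obtain ⟨a, t, rfl⟩ := List.exists_cons_of_ne_nil h
    exact ⟨a, by simp⟩
  A := (P.zip P.tail).toFinset
  A_sub := by
    intro p hp
    rw [List.mem_toFinset] at hp
    have h1 := List.of_mem_zip hp
    exact ⟨List.mem_toFinset.mpr h1.1, List.mem_toFinset.mpr (List.mem_of_mem_tail h1.2)⟩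

/-- `𝓛(G)`: the set of the digraphs `P_×` for the paths `P` of length `h_G` in `G`. -/
def LSet (G : Dgraph) : Set Dgraph :=
  {D | ∃ (P : List ℕ) (h : P ≠ []), G.IsPath P ∧ P.length = G.height + 1 ∧
    D = pathGraph P h}

/-- The class `𝕽`: reflexive digraphs `R ∈ 𝔗ₐ` with
`𝓜^{𝓛(R)}(R,R) ∩ 𝓢(R,R) ≠ ∅`. -/
def MemR (R : Dgraph) : Prop :=
  R.MemTa ∧ R.IsRefl ∧ (MLSet R R (LSet R) ∩ SHom R R).Nonempty

/-- `G` is a poset: reflexive, antisymmetric and transitive. -/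
def IsPoset (G : Dgraph) : Prop :=
  G.IsRefl ∧ (∀ v w, (v, w) ∈ G.A → (w, v) ∈ G.A → v = w) ∧
    (∀ u v w, (u, v) ∈ G.A → (v, w) ∈ G.A → (u, w) ∈ G.A)

/-- The class `𝔗ₐ^{=n}`: digraphs in `𝔗ₐ` of height `n` in which every vertex
lies on a path of length `n`. -/
def MemTaEq (n : ℕ) (G : Dgraph) : Prop :=
  G.MemTa ∧ G.height = n ∧ ∀ v ∈ G.V, ∃ p, G.IsPath p ∧ p.length = n + 1 ∧ v ∈ p

/-- A maximal path in `G`: no path in `G` properly contains its vertex set. -/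
def MaximalPath (G : Dgraph) (P : List ℕ) : Prop :=
  G.IsPath P ∧ ∀ Q, G.IsPath Q → (∀ v ∈ P, v ∈ Q) → ∀ v ∈ Q, v ∈ P

end Dgraph

open Dgraph

lemma aux_chain_strong {R : ℕ → ℕ → Prop} (p : List ℕ) (hnd : p.Nodup)
    (hc : p.Chain' R) : p.Chain' (fun v w => R v w ∧ v ≠ w) := by
  rw [List.Chain', List.isChain_iff_getElem] at hc ⊢
  intro k hk
  refine ⟨hc k hk, fun he => ?_⟩
  have : (⟨k, by omega⟩ : Fin p.length) = ⟨k + 1, by omega⟩ :=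
    List.nodup_iff_injective_get.1 hnd he
  simp at this

lemma aux_walk_nodup (G : Dgraph) (hG : G.MemTa) (p : List ℕ)
    (hV : ∀ v ∈ p, v ∈ G.V)
    (hc : p.Chain' (fun v w => (v, w) ∈ G.A ∧ v ≠ w)) : p.Nodup := by
  by_contra hnd
  rw [List.nodup_iff_getElem?_ne_getElem?] at hnd
  push_neg at hnd
  obtain ⟨a, b, hab, hb, he⟩ := hnd
  apply hG
  refine ⟨(p.drop a).take (b - a + 1), ?_, ?_, ?_, ?_⟩
  · intro v hv
    exact hV v (List.mem_of_mem_drop (List.mem_of_mem_take hv))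
  · exact (hc.drop a).take _
  · rw [List.length_take, List.length_drop]; omega
  · have hlen : ((p.drop a).take (b - a + 1)).length = b - a + 1 := by
      rw [List.length_take, List.length_drop]; omega
    rw [List.head?_eq_getElem?, List.getLast?_eq_getElem?, hlen]
    have h0 : ((p.drop a).take (b - a + 1))[0]? = some p[a] := by
      rw [List.getElem?_eq_getElem (by omega)]
      simp
    have h1 : ((p.drop a).take (b - a + 1))[b - a + 1 - 1]? = some p[b] := by
      rw [List.getElem?_eq_getElem (by omega)]
      simp only [List.getElem_take, List.getElem_drop, Option.some.injEq]
      congr 1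
      omega
    rw [h0, h1, ← List.getElem?_eq_getElem, ← List.getElem?_eq_getElem, he]

lemma aux_path_len_le (G : Dgraph) (p : List ℕ) (hp : G.IsPath p) :
    p.length ≤ G.height + 1 := by
  obtain ⟨hne, hnd, hV, hc⟩ := hp
  have hbdd : BddAbove {n | ∃ p, G.IsPath p ∧ p.length = n + 1} := by
    refine ⟨G.V.card, fun n hn => ?_⟩
    obtain ⟨q, ⟨_, hqnd, hqV, _⟩, hql⟩ := hn
    have : q.toFinset ⊆ G.V := fun v hv => hqV v (List.mem_toFinset.1 hv)
    have hcard := Finset.card_le_card this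
    rw [List.toFinset_card_of_nodup hqnd, hql] at hcard
    omega
  have hpos : 1 ≤ p.length := List.length_pos_iff.2 hne
  have hmem : p.length - 1 ∈ {n | ∃ p, G.IsPath p ∧ p.length = n + 1} :=
    ⟨p, ⟨hne, hnd, hV, hc⟩, by omega⟩
  have := le_csSup hbdd hmem
  unfold Dgraph.height
  omega

lemma aux_key (G : Dgraph) (hG : G.MemTa)
    (P P' : List ℕ) (hP : G.IsPath P) (hP' : G.IsPath P')
    (hl : P.length = G.height + 1) (hl' : P'.length = G.height + 1)
    (i j : ℕ) (hi : i < P.length) (hj : j < P'.length)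
    (hij : i < j)
    (heq : P.getD i 0 = P'.getD j 0) : False := by
  obtain ⟨hne, hnd, hV, hc⟩ := hP
  obtain ⟨hne', hnd', hV', hc'⟩ := hP'
  rw [List.getD_eq_getElem _ _ hi, List.getD_eq_getElem _ _ hj] at heq
  have cP := aux_chain_strong P hnd hc
  have cP' := aux_chain_strong P' hnd' hc'
  set q := P'.take (j + 1) ++ P.drop (i + 1) with hq
  have hi1 : i + 1 < P.length := by omega
  have hqlen : q.length = (j + 1) + (P.length - (i + 1)) := by
    rw [hq, List.length_append, List.length_take, List.length_drop]
    omega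
  have hqc : q.Chain' (fun v w => (v, w) ∈ G.A ∧ v ≠ w) := by
    rw [hq, List.Chain', List.isChain_append]
    refine ⟨cP'.take _, cP.drop _, ?_⟩
    intro x hx y hy
    have hxl : (P'.take (j + 1)).getLast? = some P'[j] := by
      rw [List.getLast?_eq_getElem?, List.getElem?_eq_getElem
        (by rw [List.length_take]; omega)]
      simp only [List.getElem_take, Option.some.injEq]
      congr 1
      rw [List.length_take]
      omega
    have hyh : (P.drop (i + 1)).head? = some P[i+1] := by
      rw [List.head?_eq_getElem?, List.getElem?_eq_getElem
        (by rw [List.length_drop]; omega)]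
      simp
    rw [hxl, Option.mem_some_iff] at hx
    rw [hyh, Option.mem_some_iff] at hy
    subst hx hy
    rw [← heq]
    have := List.isChain_iff_getElem.1 cP i (by omega)
    simpa using this
  have hqV : ∀ v ∈ q, v ∈ G.V := by
    intro v hv
    rw [hq, List.mem_append] at hv
    rcases hv with hv | hv
    · exact hV' v (List.mem_of_mem_take hv)
    · exact hV v (List.mem_of_mem_drop hv)
  have hqnd : q.Nodup := aux_walk_nodup G hG q hqV hqc
  have hqne : q ≠ [] := by
    intro h
    rw [h] at hqlen
    simp only [List.length_nil] at hqlen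
    omega
  have hqpath : G.IsPath q := ⟨hqne, hqnd, hqV, hqc.imp (fun _ _ h => h.1)⟩
  have := aux_path_len_le G q hqpath
  omega


theorem stmt_16 (G : Dgraph) (hG : G.MemTa)
    (P P' : List ℕ) (hP : G.IsPath P) (hP' : G.IsPath P')
    (hl : P.length = G.height + 1) (hl' : P'.length = G.height + 1)
    (i j : ℕ) (hi : i < P.length) (hj : j < P'.length)
    (heq : P.getD i 0 = P'.getD j 0) : i = j := by
  rcases lt_trichotomy i j with h | h | h
  · exact absurd (aux_key G hG P P' ⟨hP.1, hP.2.1, hP.2.2.1, hP.2.2.2⟩ hP' hl hl' i j hi hj h heq) not_false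
  · exact h
  · exact absurd (aux_key G hG P' P hP' hP hl' hl j i hj hi h heq.symm) not_false
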